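/- There are exactly 5 arithmetic Y-frieze patterns of width 2, with NW-to-SE diagonals (1,1), (1,2), (2,1), (2,3), (3,2). -/

import Mathlib

/-- A closed Y-frieze pattern of width `n`: a staggered array `b i j` (row `k`
consists of entries `b i (i+k+2)`) satisfying the Y-diamond rule, with zeroth
row and `(n+1)`-th row of `0`s, a row of `-1`s below, nonzero intermediate
rows, and normalized to `0` outside the pattern. -/
structure ClosedYFrieze (n : ℕ) where
  b : ℤ → ℤ → ℚ
  diamond : ∀ i j : ℤ, 3 ≤ j - i → j - i ≤ (n : ℤ) + 3 →
    b i j * b (i + 1) (j + 1) = (1 + b (i + 1) j) * (1 + b i (j + 1))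
  topZero : ∀ i : ℤ, b i (i + 2) = 0
  botZero : ∀ i : ℤ, b i (i + (n : ℤ) + 3) = 0
  negRow : ∀ i : ℤ, b i (i + (n : ℤ) + 4) = -1
  rowsNonzero : ∀ k : ℕ, 1 ≤ k → k ≤ n → ∃ i : ℤ, b i (i + (k : ℤ) + 2) ≠ 0
  outside : ∀ i j : ℤ, j - i ≤ 1 ∨ (n : ℤ) + 5 ≤ j - i → b i j = 0

/-- All entries of the nonzero rows are positive rationals. -/
def ClosedYFrieze.Positive {n : ℕ} (P : ClosedYFrieze n) : Prop :=
  ∀ (i : ℤ) (k : ℕ), 1 ≤ k → k ≤ n → 0 < P.b i (i + (k : ℤ) + 2)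

/-- All entries of the nonzero rows are positive integers. -/
def ClosedYFrieze.Arithmetic {n : ℕ} (P : ClosedYFrieze n) : Prop :=
  ∀ (i : ℤ) (k : ℕ), 1 ≤ k → k ≤ n → ∃ m : ℕ, 0 < m ∧ P.b i (i + (k : ℤ) + 2) = (m : ℚ)

def Fv : ℤ → ℚ := fun k =>
  if k % 5 = 0 then 1 else if k % 5 = 1 then 2 else if k % 5 = 2 then 2
  else if k % 5 = 3 then 1 else 3

def Gv : ℤ → ℚ := fun k =>
  if k % 5 = 0 then 1 else if k % 5 = 1 then 3 else if k % 5 = 2 then 1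
  else if k % 5 = 3 then 2 else 2

lemma Fv_rel (k : ℤ) : Fv k * Fv (k + 1) = 1 + Gv k := by
  have h : k % 5 = 0 ∨ k % 5 = 1 ∨ k % 5 = 2 ∨ k % 5 = 3 ∨ k % 5 = 4 := by omega
  rcases h with h|h|h|h|h <;>
    simp only [Fv, Gv, h] <;> split_ifs <;> first | omega | norm_num

lemma Gv_rel (k : ℤ) : Gv k * Gv (k + 1) = 1 + Fv (k + 1) := by
  have h : k % 5 = 0 ∨ k % 5 = 1 ∨ k % 5 = 2 ∨ k % 5 = 3 ∨ k % 5 = 4 := by omega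
  rcases h with h|h|h|h|h <;>
    simp only [Fv, Gv, h] <;> split_ifs <;> first | omega | norm_num

lemma Fv_nat (k : ℤ) : ∃ m : ℕ, 0 < m ∧ Fv k = (m : ℚ) := by
  have h : k % 5 = 0 ∨ k % 5 = 1 ∨ k % 5 = 2 ∨ k % 5 = 3 ∨ k % 5 = 4 := by omega
  rcases h with h|h|h|h|h <;> simp only [Fv, h] <;> split_ifs <;>
    first
      | (use 1; norm_num; done) | (use 2; norm_num; done) | (use 3; norm_num; done)

lemma Gv_nat (k : ℤ) : ∃ m : ℕ, 0 < m ∧ Gv k = (m : ℚ) := by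
  have h : k % 5 = 0 ∨ k % 5 = 1 ∨ k % 5 = 2 ∨ k % 5 = 3 ∨ k % 5 = 4 := by omega
  rcases h with h|h|h|h|h <;> simp only [Gv, h] <;> split_ifs <;>
    first
      | (use 1; norm_num; done) | (use 2; norm_num; done) | (use 3; norm_num; done)

lemma Fv_pos (k : ℤ) : 0 < Fv k := by
  obtain ⟨m, hm, h⟩ := Fv_nat k; rw [h]; exact_mod_cast hm

lemma Gv_pos (k : ℤ) : 0 < Gv k := by
  obtain ⟨m, hm, h⟩ := Gv_nat k; rw [h]; exact_mod_cast hm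


lemma ClosedYFrieze.ext' {n : ℕ} {P Q : ClosedYFrieze n} (h : P.b = Q.b) : P = Q := by
  cases P; cases Q; cases h; rfl


/-- the explicit frieze with shift s -/
def mkB (s : ℤ) : ℤ → ℤ → ℚ := fun i j =>
  if j - i = 3 then Fv (i + s) else if j - i = 4 then Gv (i + s)
  else if j - i = 6 then -1 else 0

lemma mkB_3 (s i j : ℤ) (h : j - i = 3) : mkB s i j = Fv (i + s) := by
  simp only [mkB]; rw [if_pos h]

lemma mkB_4 (s i j : ℤ) (h : j - i = 4) : mkB s i j = Gv (i + s) := by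
  simp only [mkB]; rw [if_neg (by omega), if_pos h]

lemma mkB_6 (s i j : ℤ) (h : j - i = 6) : mkB s i j = -1 := by
  simp only [mkB]; rw [if_neg (by omega), if_neg (by omega), if_pos h]

lemma mkB_0 (s i j : ℤ) (h : j - i ≠ 3 ∧ j - i ≠ 4 ∧ j - i ≠ 6) : mkB s i j = 0 := by
  simp only [mkB]; rw [if_neg h.1, if_neg h.2.1, if_neg h.2.2]

def mkP (s : ℤ) : ClosedYFrieze 2 where
  b := mkB s
  diamond := by
    intro i j h1 h2
    have h : j = i + 3 ∨ j = i + 4 ∨ j = i + 5 := by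
      push_cast at h2; omega
    rcases h with h|h|h <;> subst h
    · rw [mkB_3 s i _ (by ring), mkB_3 s (i+1) _ (by ring), mkB_4 s i _ (by ring),
        mkB_0 s (i+1) (i+3) (by omega)]
      have := Fv_rel (i + s)
      rw [show i + 1 + s = i + s + 1 by ring]
      linarith [this]
    · rw [mkB_4 s i _ (by ring), mkB_4 s (i+1) _ (by ring), mkB_3 s (i+1) _ (by ring),
        mkB_0 s i (i+4+1) (by omega)]
      have := Gv_rel (i + s)
      rw [show i + 1 + s = i + s + 1 by ring]
      linarith [this]
    · rw [mkB_0 s i (i+5) (by omega), mkB_6 s i (i+5+1) (by omega)]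
      ring
  topZero := fun i => mkB_0 s i _ (by omega)
  botZero := fun i => mkB_0 s i _ (by push_cast; omega)
  negRow := fun i => mkB_6 s i _ (by push_cast; omega)
  rowsNonzero := by
    intro k h1 h2
    interval_cases k
    · refine ⟨0, ?_⟩
      rw [mkB_3 s 0 _ (by omega)]
      exact ne_of_gt (Fv_pos (0 + s))
    · refine ⟨0, ?_⟩
      rw [mkB_4 s 0 _ (by omega)]
      exact ne_of_gt (Gv_pos (0 + s))
  outside := by
    intro i j h
    exact mkB_0 s i j (by push_cast at h; omega)

namespace ClosedYFrieze

variable (P : ClosedYFrieze 2)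

lemma frel (i : ℤ) : P.b i (i + 3) * P.b (i + 1) (i + 4) = 1 + P.b i (i + 4) := by
  have h := P.diamond i (i + 3) (by omega) (by push_cast; omega)
  have ht : P.b (i + 1) (i + 3) = 0 := by
    have := P.topZero (i + 1); rwa [show i + 1 + 2 = i + 3 by ring] at this
  rw [show i + 3 + 1 = i + 4 by ring] at h
  rw [ht] at h; linarith [h]

lemma grel (i : ℤ) : P.b i (i + 4) * P.b (i + 1) (i + 5) = 1 + P.b (i + 1) (i + 4) := by
  have h := P.diamond i (i + 4) (by omega) (by push_cast; omega)
  have hb : P.b i (i + 5) = 0 := by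
    have := P.botZero i; rwa [show i + ((2:ℕ):ℤ) + 3 = i + 5 by push_cast; ring] at this
  rw [show i + 4 + 1 = i + 5 by ring] at h
  rw [hb] at h; linarith [h]

variable {P} (hA : P.Arithmetic)

include hA

lemma fpos (i : ℤ) : 0 < P.b i (i + 3) := by
  obtain ⟨m, hm, h⟩ := hA i 1 le_rfl (by norm_num)
  rw [show i + ((1:ℕ):ℤ) + 2 = i + 3 by push_cast; ring] at h
  rw [h]; exact_mod_cast hm

lemma gpos (i : ℤ) : 0 < P.b i (i + 4) := by
  obtain ⟨m, hm, h⟩ := hA i 2 (by norm_num) le_rfl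
  rw [show i + ((2:ℕ):ℤ) + 2 = i + 4 by push_cast; ring] at h
  rw [h]; exact_mod_cast hm

lemma step_up (s : ℤ) (i : ℤ) (hi : P.b i (i + 3) = Fv (i + s) ∧ P.b i (i + 4) = Gv (i + s)) :
    P.b (i+1) (i + 1 + 3) = Fv (i + 1 + s) ∧ P.b (i+1) (i + 1 + 4) = Gv (i + 1 + s) := by
  obtain ⟨h3, h4⟩ := hi
  have hf : P.b (i + 1) (i + 4) = Fv (i + s + 1) := by
    have h1 := P.frel i
    have h2 := Fv_rel (i + s)
    rw [h3, h4] at h1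
    rw [← h1] at h2
    exact (mul_left_cancel₀ (ne_of_gt (Fv_pos (i + s))) h2).symm
  have hg : P.b (i + 1) (i + 5) = Gv (i + s + 1) := by
    have h1 := P.grel i
    have h2 := Gv_rel (i + s)
    rw [h4, hf] at h1
    rw [← h1] at h2
    exact (mul_left_cancel₀ (ne_of_gt (Gv_pos (i + s))) h2).symm
  constructor
  · rw [show i + 1 + 3 = i + 4 by ring, show i + 1 + s = i + s + 1 by ring]; exact hf
  · rw [show i + 1 + 4 = i + 5 by ring, show i + 1 + s = i + s + 1 by ring]; exact hg

lemma step_down (s : ℤ) (i : ℤ) (hi : P.b i (i + 3) = Fv (i + s) ∧ P.b i (i + 4) = Gv (i + s)) :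
    P.b (i-1) (i - 1 + 3) = Fv (i - 1 + s) ∧ P.b (i-1) (i - 1 + 4) = Gv (i - 1 + s) := by
  obtain ⟨h3, h4⟩ := hi
  have hg : P.b (i - 1) (i + 3) = Gv (i - 1 + s) := by
    have h1 := P.grel (i - 1)
    rw [show i - 1 + 4 = i + 3 by ring, show i - 1 + 1 = i by ring,
      show i - 1 + 5 = i + 4 by ring] at h1
    have h2 := Gv_rel (i - 1 + s)
    rw [show i - 1 + s + 1 = i + s by ring] at h2
    rw [h3, h4] at h1
    rw [← h1] at h2
    exact (mul_right_cancel₀ (ne_of_gt (Gv_pos (i + s))) h2).symm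
  have hf : P.b (i - 1) (i + 2) = Fv (i - 1 + s) := by
    have h1 := P.frel (i - 1)
    rw [show i - 1 + 3 = i + 2 by ring, show i - 1 + 1 = i by ring,
      show i - 1 + 4 = i + 3 by ring] at h1
    have h2 := Fv_rel (i - 1 + s)
    rw [show i - 1 + s + 1 = i + s by ring] at h2
    rw [h3, hg] at h1
    rw [← h1] at h2
    exact (mul_right_cancel₀ (ne_of_gt (Fv_pos (i + s))) h2).symm
  constructor
  · rw [show i - 1 + 3 = i + 2 by ring]; exact hf
  · rw [show i - 1 + 4 = i + 3 by ring]; exact hg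

lemma fpos' : True := trivial

lemma key (s : ℤ) (h3 : P.b 0 3 = Fv s) (h4 : P.b 0 4 = Gv s) (i : ℤ) :
    P.b i (i + 3) = Fv (i + s) ∧ P.b i (i + 4) = Gv (i + s) := by
  induction i using Int.induction_on with
  | zero => norm_num [h3, h4]
  | succ n ih =>
      have := step_up hA s n ih
      norm_num at this ⊢
      convert this using 3 <;> push_cast <;> ring
  | pred n ih =>
      have := step_down hA s (-n) ih
      push_cast at this ⊢
      ring_nf at this ⊢
      exact this

lemma beq (s : ℤ) (h3 : P.b 0 3 = Fv s) (h4 : P.b 0 4 = Gv s) : P.b = mkB s := by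
  funext i j
  have h : j - i ≤ 1 ∨ j - i = 2 ∨ j - i = 3 ∨ j - i = 4 ∨ j - i = 5 ∨ j - i = 6
      ∨ 7 ≤ j - i := by omega
  rcases h with h|h|h|h|h|h|h
  · rw [P.outside i j (Or.inl h), mkB_0 s i j (by omega)]
  · have hj : j = i + 2 := by omega
    subst hj
    rw [P.topZero i, mkB_0 s i _ (by omega)]
  · have hj : j = i + 3 := by omega
    subst hj
    rw [(key hA s h3 h4 i).1, mkB_3 s i _ (by omega)]
  · have hj : j = i + 4 := by omega
    subst hj
    rw [(key hA s h3 h4 i).2, mkB_4 s i _ (by omega)]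
  · have hj : j = i + 5 := by omega
    subst hj
    have := P.botZero i
    rw [show i + ((2:ℕ):ℤ) + 3 = i + 5 by push_cast; ring] at this
    rw [this, mkB_0 s i _ (by omega)]
  · have hj : j = i + 6 := by omega
    subst hj
    have := P.negRow i
    rw [show i + ((2:ℕ):ℤ) + 4 = i + 6 by push_cast; ring] at this
    rw [this, mkB_6 s i _ (by omega)]
  · rw [P.outside i j (Or.inr (by push_cast; omega)), mkB_0 s i j (by omega)]

end ClosedYFrieze

lemma natClassify (a b c x y : ℕ) (ha : 1 ≤ a) (hb : 1 ≤ b) (hc : 1 ≤ c)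
    (hx : 1 ≤ x) (hy : 1 ≤ y)
    (e1 : a * b = 1 + x) (e2 : b * c = 1 + y) (e3 : x * y = 1 + b) :
    x = 1 ∧ b = 1 ∨ x = 1 ∧ b = 2 ∨ x = 2 ∧ b = 1 ∨ x = 2 ∧ b = 3 ∨ x = 3 ∧ b = 2 := by
  have hxb : b ≤ x + 1 := by nlinarith
  have hyb : b ≤ y + 1 := by nlinarith
  have hb3 : b ≤ 3 := by nlinarith
  have hx4 : x ≤ 4 := by nlinarith
  interval_cases b <;> interval_cases x <;> omega

lemma classify (P : ClosedYFrieze 2) (hA : P.Arithmetic) :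
    ∃ X B : ℕ, P.b 0 3 = (X : ℚ) ∧ P.b 0 4 = (B : ℚ) ∧
      (X = 1 ∧ B = 1 ∨ X = 1 ∧ B = 2 ∨ X = 2 ∧ B = 1 ∨ X = 2 ∧ B = 3 ∨ X = 3 ∧ B = 2) := by
  have e1 := P.grel (-1)
  have e2 := P.grel 0
  have e3 := P.frel 0
  norm_num at e1 e2 e3
  obtain ⟨A, hA1, hAe⟩ := hA (-1) 2 (by norm_num) le_rfl
  obtain ⟨X, hX1, hXe⟩ := hA 0 1 le_rfl (by norm_num)
  obtain ⟨B, hB1, hBe⟩ := hA 0 2 (by norm_num) le_rfl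
  obtain ⟨Y, hY1, hYe⟩ := hA 1 1 le_rfl (by norm_num)
  obtain ⟨C, hC1, hCe⟩ := hA 1 2 (by norm_num) le_rfl
  norm_num at hAe hXe hBe hYe hCe
  rw [hAe, hBe, hXe] at e1
  rw [hBe, hCe, hYe] at e2
  rw [hXe, hYe, hBe] at e3
  have f1 : A * B = 1 + X := by exact_mod_cast e1
  have f2 : B * C = 1 + Y := by exact_mod_cast e2
  have f3 : X * Y = 1 + B := by exact_mod_cast e3
  exact ⟨X, B, hXe, hBe, natClassify A B C X Y hA1 hB1 hC1 hX1 hY1 f1 f2 f3⟩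

lemma mkP_b (s : ℤ) : (mkP s).b = mkB s := rfl

lemma mkP_arith (s : ℤ) : (mkP s).Arithmetic := by
  intro i k h1 h2
  interval_cases k
  · rw [mkP_b, mkB_3 s i _ (by push_cast; omega)]
    exact Fv_nat _
  · rw [mkP_b, mkB_4 s i _ (by push_cast; omega)]
    exact Gv_nat _

lemma mkP_ne {s t : ℤ} (h : Fv s ≠ Fv t ∨ Gv s ≠ Gv t) : mkP s ≠ mkP t := by
  intro heq
  have hb := congrArg ClosedYFrieze.b heq
  rw [mkP_b, mkP_b] at hb
  have h3 : Fv (0 + s) = Fv (0 + t) := by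
    rw [← mkB_3 s 0 3 (by omega), ← mkB_3 t 0 3 (by omega), hb]
  have h4 : Gv (0 + s) = Gv (0 + t) := by
    rw [← mkB_4 s 0 4 (by omega), ← mkB_4 t 0 4 (by omega), hb]
  rw [zero_add, zero_add] at h3 h4
  tauto

lemma Fv0 : Fv 0 = 1 := by norm_num [Fv]
lemma Fv1 : Fv 1 = 2 := by norm_num [Fv]
lemma Fv2 : Fv 2 = 2 := by norm_num [Fv]
lemma Fv3 : Fv 3 = 1 := by norm_num [Fv]
lemma Fv4 : Fv 4 = 3 := by norm_num [Fv]
lemma Gv0 : Gv 0 = 1 := by norm_num [Gv]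
lemma Gv1 : Gv 1 = 3 := by norm_num [Gv]
lemma Gv2 : Gv 2 = 1 := by norm_num [Gv]
lemma Gv3 : Gv 3 = 2 := by norm_num [Gv]
lemma Gv4 : Gv 4 = 2 := by norm_num [Gv]

lemma setEq : {P : ClosedYFrieze 2 | P.Arithmetic}
    = {mkP 0, mkP 1, mkP 2, mkP 3, mkP 4} := by
  ext P
  simp only [Set.mem_setOf_eq, Set.mem_insert_iff, Set.mem_singleton_iff]
  constructor
  · intro hA
    obtain ⟨X, B, hX, hB, hc⟩ := classify P hA
    rcases hc with ⟨h1, h2⟩|⟨h1, h2⟩|⟨h1, h2⟩|⟨h1, h2⟩|⟨h1, h2⟩ <;> subst h1 <;> subst h2 <;>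
      norm_num at hX hB
    · exact Or.inl (ClosedYFrieze.ext' (ClosedYFrieze.beq hA 0 (by rw [hX, Fv0]) (by rw [hB, Gv0])))
    · exact Or.inr (Or.inr (Or.inr (Or.inl
        (ClosedYFrieze.ext' (ClosedYFrieze.beq hA 3 (by rw [hX, Fv3]) (by rw [hB, Gv3]))))))
    · exact Or.inr (Or.inr (Or.inl
        (ClosedYFrieze.ext' (ClosedYFrieze.beq hA 2 (by rw [hX, Fv2]) (by rw [hB, Gv2])))))
    · exact Or.inr (Or.inl
        (ClosedYFrieze.ext' (ClosedYFrieze.beq hA 1 (by rw [hX, Fv1]) (by rw [hB, Gv1]))))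
    · exact Or.inr (Or.inr (Or.inr (Or.inr
        (ClosedYFrieze.ext' (ClosedYFrieze.beq hA 4 (by rw [hX, Fv4]) (by rw [hB, Gv4]))))))
  · intro h
    rcases h with h|h|h|h|h <;> subst h <;> exact mkP_arith _

lemma ncardEq : {P : ClosedYFrieze 2 | P.Arithmetic}.ncard = 5 := by
  rw [setEq]
  rw [Set.ncard_insert_of_notMem (by
        simp only [Set.mem_insert_iff, Set.mem_singleton_iff]
        push_neg
        exact ⟨mkP_ne (Or.inl (by rw [Fv0, Fv1]; norm_num)),
          mkP_ne (Or.inl (by rw [Fv0, Fv2]; norm_num)),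
          mkP_ne (Or.inr (by rw [Gv0, Gv3]; norm_num)),
          mkP_ne (Or.inl (by rw [Fv0, Fv4]; norm_num))⟩),
    Set.ncard_insert_of_notMem (by
        simp only [Set.mem_insert_iff, Set.mem_singleton_iff]
        push_neg
        exact ⟨mkP_ne (Or.inr (by rw [Gv1, Gv2]; norm_num)),
          mkP_ne (Or.inl (by rw [Fv1, Fv3]; norm_num)),
          mkP_ne (Or.inl (by rw [Fv1, Fv4]; norm_num))⟩),
    Set.ncard_insert_of_notMem (by
        simp only [Set.mem_insert_iff, Set.mem_singleton_iff]
        push_neg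
        exact ⟨mkP_ne (Or.inl (by rw [Fv2, Fv3]; norm_num)),
          mkP_ne (Or.inl (by rw [Fv2, Fv4]; norm_num))⟩),
    Set.ncard_insert_of_notMem (by
        simp only [Set.mem_singleton_iff]
        exact mkP_ne (Or.inl (by rw [Fv3, Fv4]; norm_num))),
    Set.ncard_singleton]


/-- There are exactly 5 arithmetic Y-frieze patterns of width 2, and the NW-to-SE
diagonal `(b 0 3, b 0 4)` of any of them is one of
`(1,1), (1,2), (2,1), (2,3), (3,2)`. -/
theorem stmt11 :
    {P : ClosedYFrieze 2 | P.Arithmetic}.ncard = 5 ∧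
    ∀ P : ClosedYFrieze 2, P.Arithmetic →
      (P.b 0 3, P.b 0 4) ∈ ({(1, 1), (1, 2), (2, 1), (2, 3), (3, 2)} : Set (ℚ × ℚ)) := by
  refine ⟨ncardEq, ?_⟩
  intro P hA
  obtain ⟨X, B, hX, hB, hc⟩ := classify P hA
  simp only [Set.mem_insert_iff, Set.mem_singleton_iff, Prod.mk.injEq]
  rcases hc with ⟨h1, h2⟩|⟨h1, h2⟩|⟨h1, h2⟩|⟨h1, h2⟩|⟨h1, h2⟩ <;> subst h1 <;> subst h2 <;>
    norm_num at hX hB <;> tauto
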